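/- The Gibbs distribution π^η with the anyput throughput T_w = ν_w·γ_w satisfies detailed balance with respect to the anyput-mode EconCast-C transition rates: for all w, w' ∈ W, π_w^η · r(w,w') = π_{w'}^η · r(w',w). -/

import Mathlib

open Finset

inductive NodeState : Type
  | s | l | x
deriving DecidableEq

instance instFintypeNodeState : Fintype NodeState :=
  ⟨{NodeState.s, NodeState.l, NodeState.x}, fun a => by cases a <;> simp⟩

abbrev NetState (N : ℕ) := Fin N → NodeState

/-- Number of nodes in transmit state. -/
def numTransmit {N : ℕ} (w : NetState N) : ℕ :=
  (univ.filter fun i => w i = NodeState.x).card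

/-- Number of nodes in listen state. -/
def numListen {N : ℕ} (w : NetState N) : ℕ :=
  (univ.filter fun i => w i = NodeState.l).card

/-- The (finite) set `W` of collision-free network states. -/
def CF (N : ℕ) : Finset (NetState N) :=
  univ.filter fun w => numTransmit w ≤ 1

/-- Indicator `ν_w` that exactly one node is transmitting. -/
def nu {N : ℕ} (w : NetState N) : ℝ := if numTransmit w = 1 then 1 else 0

/-- Indicator `γ_w` that at least one node is listening. -/
def gam {N : ℕ} (w : NetState N) : ℝ := if 0 < numListen w then 1 else 0

/-- Anyput throughput `T_w = ν_w · γ_w` of a state. -/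
noncomputable def Ta {N : ℕ} (w : NetState N) : ℝ := nu w * gam w

/-- The penalty `P_w = Σ_{i: w_i=l} η_i L_i + Σ_{i: w_i=x} η_i X_i`. -/
noncomputable def penalty {N : ℕ} (η L X : Fin N → ℝ) (w : NetState N) : ℝ :=
  ∑ i ∈ univ.filter (fun i => w i = NodeState.l), η i * L i
  + ∑ i ∈ univ.filter (fun i => w i = NodeState.x), η i * X i

/-- Normalizing constant `Z^η`. -/
noncomputable def Zfun (N : ℕ) (σ : ℝ) (η L X : Fin N → ℝ) (T : NetState N → ℝ) : ℝ :=
  ∑ w ∈ CF N, Real.exp ((T w - penalty η L X w) / σ)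

/-- The Gibbs distribution `π^η_w = exp((T_w − P_w)/σ)/Z^η`. -/
noncomputable def gibbs (N : ℕ) (σ : ℝ) (η L X : Fin N → ℝ) (T : NetState N → ℝ)
    (w : NetState N) : ℝ :=
  Real.exp ((T w - penalty η L X w) / σ) / Zfun N σ η L X T

/-- Anyput-mode EconCast-C transition rates: from a state with no transmitter, a
sleeping node wakes to listen at rate `exp(−η_i L_i/σ)`, a listening node goes
to sleep at rate `1`, and a listening node starts transmitting at rate
`exp(η_i(L_i − X_i)/σ)`; a transmitting node moves back to listen at rate
`exp(−γ_w/σ)`; all other rates vanish. -/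
noncomputable def rateCA (N : ℕ) (σ : ℝ) (η L X : Fin N → ℝ) (w w' : NetState N) : ℝ :=
  (∑ i : Fin N, if w i = NodeState.s ∧ numTransmit w = 0 ∧ w' = Function.update w i NodeState.l
      then Real.exp (-(η i * L i) / σ) else 0)
  + (∑ i : Fin N, if w i = NodeState.l ∧ numTransmit w = 0 ∧ w' = Function.update w i NodeState.s
      then 1 else 0)
  + (∑ i : Fin N, if w i = NodeState.l ∧ numTransmit w = 0 ∧ w' = Function.update w i NodeState.x
      then Real.exp (η i * (L i - X i) / σ) else 0)
  + (∑ i : Fin N, if w i = NodeState.x ∧ w' = Function.update w i NodeState.l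
      then Real.exp (-(gam w) / σ) else 0)

/-! ### Auxiliary lemmas -/

section Aux

variable {N : ℕ}

lemma upd_eq_upd {w : NetState N} {i j : Fin N} {u v : NodeState}
    (hju : w j ≠ u) (hiv : w i ≠ v)
    (h : Function.update w j u = Function.update w i v) : j = i := by
  by_contra hne
  have hj := congrFun h j
  rw [Function.update_self, Function.update_of_ne hne] at hj
  exact hju hj.symm

lemma sum_rate3 (w w' : NetState N) (i : Fin N) (v u src : NodeState)
    (hsu : src ≠ u) (hiv : w i ≠ v) (hw' : w' = Function.update w i v)
    (c : Prop) [Decidable c] (a : Fin N → ℝ) :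
    (∑ j : Fin N, if w j = src ∧ c ∧ w' = Function.update w j u then a j else 0)
      = if w i = src ∧ c ∧ v = u then a i else 0 := by
  subst hw'
  rw [Finset.sum_eq_single_of_mem i (Finset.mem_univ i) ?_]
  · refine if_congr ?_ rfl rfl
    constructor
    · rintro ⟨ha, hc, he⟩
      refine ⟨ha, hc, ?_⟩
      have := congrFun he i
      simpa using this
    · rintro ⟨ha, hc, rfl⟩
      exact ⟨ha, hc, rfl⟩
  · intro j _ hj
    rw [if_neg]
    rintro ⟨ha, hc, he⟩
    have hju : w j ≠ u := by rw [ha]; exact hsu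
    exact hj (upd_eq_upd hju hiv he.symm)

lemma sum_rate2 (w w' : NetState N) (i : Fin N) (v u src : NodeState)
    (hsu : src ≠ u) (hiv : w i ≠ v) (hw' : w' = Function.update w i v)
    (a : Fin N → ℝ) :
    (∑ j : Fin N, if w j = src ∧ w' = Function.update w j u then a j else 0)
      = if w i = src ∧ v = u then a i else 0 := by
  subst hw'
  rw [Finset.sum_eq_single_of_mem i (Finset.mem_univ i) ?_]
  · refine if_congr ?_ rfl rfl
    constructor
    · rintro ⟨ha, he⟩
      refine ⟨ha, ?_⟩
      have := congrFun he i
      simpa using this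
    · rintro ⟨ha, rfl⟩
      exact ⟨ha, rfl⟩
  · intro j _ hj
    rw [if_neg]
    rintro ⟨ha, he⟩
    have hju : w j ≠ u := by rw [ha]; exact hsu
    exact hj (upd_eq_upd hju hiv he.symm)

/-- Per-node penalty contribution. -/
noncomputable def pen (η L X : Fin N → ℝ) (st : NodeState) (j : Fin N) : ℝ :=
  (if st = NodeState.l then η j * L j else 0) + (if st = NodeState.x then η j * X j else 0)

lemma penalty_eq_sum (η L X : Fin N → ℝ) (w : NetState N) :
    penalty η L X w = ∑ j : Fin N, pen η L X (w j) j := by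
  unfold penalty pen
  rw [Finset.sum_filter, Finset.sum_filter, ← Finset.sum_add_distrib]

lemma penalty_update (η L X : Fin N → ℝ) (w : NetState N) (i : Fin N) (v : NodeState) :
    penalty η L X (Function.update w i v)
      = penalty η L X w - pen η L X (w i) i + pen η L X v i := by
  rw [penalty_eq_sum, penalty_eq_sum,
    ← Finset.sum_erase_add _ _ (Finset.mem_univ i),
    ← Finset.sum_erase_add _ (fun j => pen η L X (w j) j) (Finset.mem_univ i)]
  have h1 : ∑ j ∈ Finset.univ.erase i, pen η L X (Function.update w i v j) j
      = ∑ j ∈ Finset.univ.erase i, pen η L X (w j) j := by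
    refine Finset.sum_congr rfl fun j hj => ?_
    rw [Function.update_of_ne (Finset.ne_of_mem_erase hj)]
  rw [h1, Function.update_self]
  ring

lemma nt_sum (w : NetState N) :
    numTransmit w = ∑ j : Fin N, if w j = NodeState.x then 1 else 0 := by
  unfold numTransmit
  rw [Finset.card_filter]

lemma nt_update (w : NetState N) (i : Fin N) (v : NodeState) :
    numTransmit (Function.update w i v) + (if w i = NodeState.x then 1 else 0)
      = numTransmit w + (if v = NodeState.x then 1 else 0) := by
  rw [nt_sum, nt_sum,
    ← Finset.sum_erase_add _ _ (Finset.mem_univ i),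
    ← Finset.sum_erase_add _ (fun j => if w j = NodeState.x then 1 else 0) (Finset.mem_univ i)]
  have h1 : (∑ j ∈ Finset.univ.erase i, if Function.update w i v j = NodeState.x then 1 else 0)
      = ∑ j ∈ Finset.univ.erase i, if w j = NodeState.x then 1 else 0 := by
    refine Finset.sum_congr rfl fun j hj => ?_
    rw [Function.update_of_ne (Finset.ne_of_mem_erase hj)]
  rw [h1, Function.update_self]
  ring

lemma one_le_nt {w : NetState N} {i : Fin N} (h : w i = NodeState.x) :
    1 ≤ numTransmit w := by
  unfold numTransmit
  exact Finset.card_pos.mpr ⟨i, by simp [h]⟩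

lemma Ta_of_nt_ne {w : NetState N} (h : numTransmit w ≠ 1) : Ta w = 0 := by
  simp [Ta, nu, h]

lemma Ta_of_nt_one {w : NetState N} (h : numTransmit w = 1) : Ta w = gam w := by
  simp [Ta, nu, h]

lemma rateCA_eq_zero (σ : ℝ) (η L X : Fin N → ℝ) (w w' : NetState N)
    (h : ¬ ∃ i v, w i ≠ v ∧ w' = Function.update w i v) :
    rateCA N σ η L X w w' = 0 := by
  rw [rateCA]
  have z1 : (∑ j : Fin N, if w j = NodeState.s ∧ numTransmit w = 0
        ∧ w' = Function.update w j NodeState.l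
      then Real.exp (-(η j * L j) / σ) else 0) = 0 := by
    refine Finset.sum_eq_zero fun j _ => ?_
    rw [if_neg]; rintro ⟨h1, -, h3⟩
    exact h ⟨j, NodeState.l, by simp [h1], h3⟩
  have z2 : (∑ j : Fin N, if w j = NodeState.l ∧ numTransmit w = 0
        ∧ w' = Function.update w j NodeState.s
      then (1 : ℝ) else 0) = 0 := by
    refine Finset.sum_eq_zero fun j _ => ?_
    rw [if_neg]; rintro ⟨h1, -, h3⟩
    exact h ⟨j, NodeState.s, by simp [h1], h3⟩
  have z3 : (∑ j : Fin N, if w j = NodeState.l ∧ numTransmit w = 0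
        ∧ w' = Function.update w j NodeState.x
      then Real.exp (η j * (L j - X j) / σ) else 0) = 0 := by
    refine Finset.sum_eq_zero fun j _ => ?_
    rw [if_neg]; rintro ⟨h1, -, h3⟩
    exact h ⟨j, NodeState.x, by simp [h1], h3⟩
  have z4 : (∑ j : Fin N, if w j = NodeState.x ∧ w' = Function.update w j NodeState.l
      then Real.exp (-(gam w) / σ) else 0) = 0 := by
    refine Finset.sum_eq_zero fun j _ => ?_
    rw [if_neg]; rintro ⟨h1, h3⟩
    exact h ⟨j, NodeState.l, by simp [h1], h3⟩
  rw [z1, z2, z3, z4]; ring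

lemma exists_update_symm {w w' : NetState N}
    (h : ∃ i v, w' i ≠ v ∧ w = Function.update w' i v) :
    ∃ i v, w i ≠ v ∧ w' = Function.update w i v := by
  obtain ⟨i, v, hiv, rfl⟩ := h
  refine ⟨i, w' i, ?_, ?_⟩
  · rw [Function.update_self]
    exact fun e => hiv e.symm
  · rw [Function.update_idem, Function.update_eq_self]

end Aux

/-- The Gibbs distribution with anyput throughput satisfies
detailed balance w.r.t. the anyput-mode EconCast-C transition rates. -/
theorem gibbs_detailed_balance_econcastC_anyput (N : ℕ) (hN : 2 ≤ N)
    (σ : ℝ) (hσ : 0 < σ) (η L X : Fin N → ℝ)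
    (hη : ∀ i, 0 ≤ η i) (hL : ∀ i, 0 < L i) (hX : ∀ i, 0 < X i) :
    ∀ w ∈ CF N, ∀ w' ∈ CF N,
      gibbs N σ η L X Ta w * rateCA N σ η L X w w'
        = gibbs N σ η L X Ta w' * rateCA N σ η L X w' w := by
  intro w hw w' hw'
  have hwC : numTransmit w ≤ 1 := by simpa [CF] using hw
  have hw'C : numTransmit w' ≤ 1 := by simpa [CF] using hw'
  by_cases hd : ∃ i v, w i ≠ v ∧ w' = Function.update w i v
  · obtain ⟨i, v, hiv, rfl⟩ := hd
    have hvw : (Function.update w i v) i ≠ w i := by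
      rw [Function.update_self]; exact fun e => hiv e.symm
    have hrev : w = Function.update (Function.update w i v) i (w i) := by
      rw [Function.update_idem, Function.update_eq_self]
    -- forward rate
    have hF : rateCA N σ η L X w (Function.update w i v)
        = (if w i = NodeState.s ∧ numTransmit w = 0 ∧ v = NodeState.l
            then Real.exp (-(η i * L i) / σ) else 0)
        + (if w i = NodeState.l ∧ numTransmit w = 0 ∧ v = NodeState.s then (1 : ℝ) else 0)
        + (if w i = NodeState.l ∧ numTransmit w = 0 ∧ v = NodeState.x
            then Real.exp (η i * (L i - X i) / σ) else 0)
        + (if w i = NodeState.x ∧ v = NodeState.l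
            then Real.exp (-(gam w) / σ) else 0) := by
      rw [rateCA,
        sum_rate3 w _ i v NodeState.l NodeState.s (by simp) hiv rfl _ _,
        sum_rate3 w _ i v NodeState.s NodeState.l (by simp) hiv rfl _ _,
        sum_rate3 w _ i v NodeState.x NodeState.l (by simp) hiv rfl _ _,
        sum_rate2 w _ i v NodeState.l NodeState.x (by simp) hiv rfl _]
    -- reverse rate
    have hR : rateCA N σ η L X (Function.update w i v) w
        = (if v = NodeState.s ∧ numTransmit (Function.update w i v) = 0 ∧ w i = NodeState.l
            then Real.exp (-(η i * L i) / σ) else 0)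
        + (if v = NodeState.l ∧ numTransmit (Function.update w i v) = 0 ∧ w i = NodeState.s
            then (1 : ℝ) else 0)
        + (if v = NodeState.l ∧ numTransmit (Function.update w i v) = 0 ∧ w i = NodeState.x
            then Real.exp (η i * (L i - X i) / σ) else 0)
        + (if v = NodeState.x ∧ w i = NodeState.l
            then Real.exp (-(gam (Function.update w i v)) / σ) else 0) := by
      rw [rateCA,
        sum_rate3 (Function.update w i v) w i (w i) NodeState.l NodeState.s (by simp) hvw hrev _ _,
        sum_rate3 (Function.update w i v) w i (w i) NodeState.s NodeState.l (by simp) hvw hrev _ _,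
        sum_rate3 (Function.update w i v) w i (w i) NodeState.x NodeState.l (by simp) hvw hrev _ _,
        sum_rate2 (Function.update w i v) w i (w i) NodeState.l NodeState.x (by simp) hvw hrev _]
      simp only [Function.update_self]
    have hnt := nt_update w i v
    have hp := penalty_update η L X w i v
    rw [gibbs, gibbs, div_mul_eq_mul_div, div_mul_eq_mul_div]
    congr 1
    rw [hF, hR]
    cases h1 : w i with
    | s =>
      cases v with
      | s => exact absurd h1 hiv
      | l =>
        simp only [h1, if_pos, if_neg, reduceCtorEq, false_and, and_false, true_and, and_true,
          if_false, add_zero, zero_add] at *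
        by_cases hA : numTransmit w = 0
        · have hA' : numTransmit (Function.update w i NodeState.l) = 0 := by omega
          rw [if_pos hA, if_pos hA',
            Ta_of_nt_ne (by omega), Ta_of_nt_ne (by omega : numTransmit (Function.update w i NodeState.l) ≠ 1),
            hp]
          simp only [pen, reduceCtorEq, if_false, if_pos, ite_true, ite_false]
          rw [mul_one, ← Real.exp_add]
          congr 1
          field_simp
          ring
        · have hA' : numTransmit (Function.update w i NodeState.l) ≠ 0 := by omega
          rw [if_neg hA, if_neg hA', mul_zero, mul_zero]
      | x =>
        simp only [h1, reduceCtorEq, false_and, and_false, true_and, if_false, add_zero,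
          zero_add] at *
        rw [mul_zero, mul_zero]
    | l =>
      cases v with
      | s =>
        simp only [h1, if_pos, if_neg, reduceCtorEq, false_and, and_false, true_and, and_true,
          if_false, add_zero, zero_add] at *
        by_cases hA : numTransmit w = 0
        · have hA' : numTransmit (Function.update w i NodeState.s) = 0 := by omega
          rw [if_pos hA, if_pos hA',
            Ta_of_nt_ne (by omega), Ta_of_nt_ne (by omega : numTransmit (Function.update w i NodeState.s) ≠ 1),
            hp]
          simp only [pen, reduceCtorEq, if_false, if_pos, ite_true, ite_false]
          rw [mul_one, ← Real.exp_add]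
          congr 1
          field_simp
          ring
        · have hA' : numTransmit (Function.update w i NodeState.s) ≠ 0 := by omega
          rw [if_neg hA, if_neg hA', mul_zero, mul_zero]
      | l => exact absurd h1 hiv
      | x =>
        simp only [h1, reduceCtorEq, false_and, and_false, true_and, and_true, if_false,
          add_zero, zero_add, if_pos] at *
        have hup : numTransmit (Function.update w i NodeState.x) = numTransmit w + 1 := by omega
        have hA : numTransmit w = 0 := by omega
        rw [if_pos hA, Ta_of_nt_ne (by omega), Ta_of_nt_one (by omega), hp]
        simp only [pen, reduceCtorEq, if_false, ite_true, ite_false]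
        rw [← Real.exp_add, ← Real.exp_add]
        congr 1
        field_simp
        ring
    | x =>
      cases v with
      | s =>
        simp only [h1, reduceCtorEq, false_and, and_false, true_and, if_false, add_zero,
          zero_add] at *
        rw [mul_zero, mul_zero]
      | l =>
        have h1le := one_le_nt h1
        have hnt2 : numTransmit (Function.update w i NodeState.l) + 1 = numTransmit w := by
          have h2 := nt_update w i NodeState.l
          rw [if_pos h1, if_neg (by simp)] at h2
          omega
        simp only [h1, reduceCtorEq, false_and, and_false, true_and, and_true, if_false,
          add_zero, zero_add, if_pos] at *
        have hA : numTransmit w = 1 := by omega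
        have hA' : numTransmit (Function.update w i NodeState.l) = 0 := by omega
        rw [if_pos hA', Ta_of_nt_one hA, Ta_of_nt_ne (by omega), hp]
        simp only [pen, reduceCtorEq, if_false, ite_true, ite_false]
        rw [← Real.exp_add, ← Real.exp_add]
        congr 1
        field_simp
        ring
      | x => exact absurd h1 hiv
  · have hd' : ¬ ∃ i v, w' i ≠ v ∧ w = Function.update w' i v :=
      fun h => hd (exists_update_symm h)
    rw [rateCA_eq_zero σ η L X w w' hd, rateCA_eq_zero σ η L X w' w hd', mul_zero, mul_zero]
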